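/- arXiv:0710.3924 — 6 statements merged into one kernel-verified Lean document; each statement's English description precedes it below -/
import Mathlib

section
/- Let V be a finite-dimensional real vector space, W = V ⊕ V*, and let 𝒥 be a linear generalized complex structure on V. Then there exists a linear generalized complex structure 𝒥′ on V such that 𝒥𝒥′ = 𝒥′𝒥 and the bilinear form (u, v) ↦ ⟨−𝒥𝒥′(u), v⟩ is positive definite, i.e., ⟨−𝒥𝒥′(u), u⟩ > 0 for every nonzero u ∈ W. (This is the pointwise content of the lemma that every H-twisted generalized complex manifold admits a compatible generalized almost complex structure.) -/
/-- For a real vector space `V`, we model `W = V ⊕ V*` as `V × (V →ₗ[ℝ] ℝ)`.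
The natural pairing `⟨X + ξ, Y + η⟩ = (1/2)(η(X) + ξ(Y))`. -/
noncomputable def naturalPairing (V : Type*) [AddCommGroup V] [Module ℝ V] :
    (V × (V →ₗ[ℝ] ℝ)) → (V × (V →ₗ[ℝ] ℝ)) → ℝ :=
  fun u v => (v.2 u.1 + u.2 v.1) / 2

/-- A linear generalized complex structure on `V`: a linear map `𝒥 : W → W` with
`𝒥² = -id` preserving the natural pairing. -/
def IsLinearGCS {V : Type*} [AddCommGroup V] [Module ℝ V]
    (J : (V × (V →ₗ[ℝ] ℝ)) →ₗ[ℝ] (V × (V →ₗ[ℝ] ℝ))) : Prop :=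
  J ∘ₗ J = -LinearMap.id ∧
  ∀ u v, naturalPairing V (J u) (J v) = naturalPairing V u v

open scoped RealInnerProductSpace

private lemma commute_aeval_poly {A : Type*} [Ring A] [Algebra ℝ A] {a b : A}
    (h : Commute b a) (p : Polynomial ℝ) : Commute b (Polynomial.aeval a p) := by
  induction p using Polynomial.induction_on' with
  | add p q hp hq => simpa [map_add] using hp.add_right hq
  | monomial n c =>
    rw [Polynomial.aeval_monomial]
    have h1 : Commute b ((algebraMap ℝ A) c) := (Algebra.commutes c b).symm
    exact h1.mul_right (h.pow_right n)

lemma exists_compat_G {E : Type*} [NormedAddCommGroup E] [InnerProductSpace ℝ E]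
    [FiniteDimensional ℝ E] (b : E →ₗ[ℝ] E →ₗ[ℝ] ℝ)
    (hbs : ∀ u v, b u v = b v u)
    (hbn : ∀ u, (∀ v, b u v = 0) → u = 0)
    (J : E →ₗ[ℝ] E) (hJ2 : ∀ u, J (J u) = -u)
    (hJb : ∀ u v, b (J u) (J v) = b u v)
    (hJi : ∀ u v, ⟪J u, J v⟫ = ⟪u, v⟫) :
    ∃ G : E →ₗ[ℝ] E, (∀ u, G (G u) = u) ∧ (∀ u, G (J u) = J (G u)) ∧
      (∀ u v, b (G u) (G v) = b u v) ∧ (∀ u, u ≠ 0 → 0 < b (G u) u) := by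
  classical
  -- the operator A representing b w.r.t. the inner product
  let A : E →ₗ[ℝ] E :=
  { toFun := fun u => (InnerProductSpace.toDual ℝ E).symm (LinearMap.toContinuousLinearMap (b u))
    map_add' := by intro u v; simp [map_add]
    map_smul' := by intro c u; simp [map_smul] }
  have hA : ∀ u v, ⟪A u, v⟫ = b u v := by
    intro u v
    simp [A, InnerProductSpace.toDual_symm_apply]
  have hAsym : A.IsSymmetric := by
    intro u v
    rw [hA, hbs, ← hA, real_inner_comm]
  have hJadj : ∀ u v, ⟪J u, v⟫ = -⟪u, J v⟫ := by
    intro u v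
    have h := hJi u (J v)
    rw [hJ2, inner_neg_right] at h
    linarith
  have hAJcomm : ∀ u, A (J u) = J (A u) := by
    intro u
    apply ext_inner_right ℝ
    intro v
    rw [hA, hJadj (A u) v, hA]
    have hv : v = -(J (J v)) := by rw [hJ2, neg_neg]
    calc b (J u) v = b (J u) (-(J (J v))) := by rw [← hv]
    _ = -(b (J u) (J (J v))) := by rw [map_neg]
    _ = -(b u (J v)) := by rw [hJb]
  have hAinj : ∀ u, A u = 0 → u = 0 := by
    intro u h
    exact hbn u fun v => by rw [← hA, h, inner_zero_left]
  -- spectral theorem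
  set n := Module.finrank ℝ E with hnn
  have hn : Module.finrank ℝ E = n := rfl
  let e := hAsym.eigenvectorBasis hn
  let μ := hAsym.eigenvalues hn
  have heig : ∀ i, A (e i) = μ i • e i := fun i => hAsym.apply_eigenvectorBasis hn i
  have hμ0 : ∀ i, μ i ≠ 0 := by
    intro i h
    have h2 := heig i
    rw [h, zero_smul] at h2
    exact (e.toBasis.ne_zero i) (by simpa using hAinj _ h2)
  -- sign polynomial
  set s : Finset ℝ := Finset.image μ Finset.univ with hs
  set f : ℝ → ℝ := fun x => if x < 0 then -1 else 1 with hf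
  set p : Polynomial ℝ := Lagrange.interpolate s id f with hp
  have hinj : Set.InjOn (id : ℝ → ℝ) s := Function.injective_id.injOn
  have hpμ : ∀ i, p.eval (μ i) = f (μ i) := fun i =>
    Lagrange.eval_interpolate_at_node f hinj (Finset.mem_image_of_mem μ (Finset.mem_univ i))
  set G : E →ₗ[ℝ] E := Polynomial.aeval A p with hGdef
  have hGe : ∀ i, G (e i) = f (μ i) • e i := by
    intro i
    have h := Module.End.aeval_apply_of_hasEigenvector (p := p)
      (hAsym.hasEigenvector_eigenvectorBasis hn i)
    rw [hGdef]
    rw [h]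
    norm_num [hpμ i]
    exact congrArg (fun x => x • e i) (hpμ i)
  -- commutation
  have hGA : Commute A G := commute_aeval_poly (Commute.refl A) p
  have hJA : Commute J A := by
    apply LinearMap.ext
    intro u
    exact (hAJcomm u).symm
  have hJG : Commute J G := commute_aeval_poly hJA p
  -- symmetry of polynomials in A
  have hpow : ∀ m : ℕ, (A ^ m).IsSymmetric := by
    intro m
    induction m with
    | zero => intro u v; simp
    | succ m ih =>
      intro u v
      have h1 : (A ^ (m + 1)) u = (A ^ m) (A u) := by rw [pow_succ]; rfl
      have h2 : (A ^ (m + 1)) v = A ((A ^ m) v) := by rw [pow_succ']; rfl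
      rw [h1, h2, ih, hAsym]
  have haevalsym : ∀ q : Polynomial ℝ, (Polynomial.aeval A q : E →ₗ[ℝ] E).IsSymmetric := by
    intro q
    induction q using Polynomial.induction_on' with
    | add q r hq hr => rw [map_add]; exact hq.add hr
    | monomial m c =>
      rw [Polynomial.aeval_monomial]
      intro u v
      rw [Algebra.algebraMap_eq_smul_one]
      have h1 : ∀ w, ((c • (1 : E →ₗ[ℝ] E)) * A ^ m) w = c • (A ^ m) w := by
        intro w; simp
      rw [h1, h1, real_inner_smul_left, real_inner_smul_right, hpow]
  have hGsym : G.IsSymmetric := haevalsym p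
  -- G ∘ G = id
  have hG2 : ∀ u, G (G u) = u := by
    have : G * G = Polynomial.aeval A (p * p) := (map_mul _ _ _).symm
    have hb : ∀ i, (G * G) (e i) = LinearMap.id (R := ℝ) (M := E) (e i) := by
      intro i
      have hfsq : f (μ i) * f (μ i) = 1 := by
        rw [hf]; by_cases h : μ i < 0 <;> simp [h]
      rw [this, Module.End.aeval_apply_of_hasEigenvector
        (hAsym.hasEigenvector_eigenvectorBasis hn i), Polynomial.eval_mul]
      norm_num [hpμ i, hfsq]
      exact (congrArg (fun x => x • e i) (show p.eval (μ i) * p.eval (μ i) = 1 by rw [hpμ i, hfsq])).trans (one_smul ℝ (e i))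
    have heq : G * G = LinearMap.id := e.toBasis.ext fun i => by
      simpa using hb i
    intro u
    have := LinearMap.ext_iff.mp heq u
    simpa using this
  -- G commutes with J
  have hGJ : ∀ u, G (J u) = J (G u) := by
    intro u
    have := LinearMap.ext_iff.mp hJG.eq u
    simpa using this.symm
  -- G preserves b
  have hAG : ∀ u, A (G u) = G (A u) := fun u => LinearMap.ext_iff.mp hGA.eq u
  have hGb : ∀ u v, b (G u) (G v) = b u v := by
    intro u v
    rw [← hA, ← hA]
    calc ⟪A (G u), G v⟫ = ⟪G (A u), G v⟫ := by rw [hAG]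
    _ = ⟪A u, G (G v)⟫ := hGsym _ _
    _ = ⟪A u, v⟫ := by rw [hG2]
  -- positivity
  have hAGsym : ∀ x y, ⟪A (G x), y⟫ = ⟪x, A (G y)⟫ := by
    intro x y
    calc ⟪A (G x), y⟫ = ⟪G x, A y⟫ := hAsym _ _
    _ = ⟪x, G (A y)⟫ := hGsym _ _
    _ = ⟪x, A (G y)⟫ := by rw [← hAG]
  have hinner : ∀ x y : E, ⟪x, y⟫ = ∑ i, e.repr x i * e.repr y i := by
    intro x y
    conv_lhs => rw [← e.sum_repr x]
    rw [sum_inner]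
    refine Finset.sum_congr rfl fun i _ => ?_
    rw [real_inner_smul_left, e.repr_apply_apply, e.repr_apply_apply]
  have hν : ∀ i, 0 < f (μ i) * μ i := by
    intro i
    rcases lt_trichotomy (μ i) 0 with h | h | h
    · simp only [hf]
      rw [if_pos h]
      nlinarith
    · exact absurd h (hμ0 i)
    · simp only [hf]
      rw [if_neg (not_lt.mpr h.le)]
      linarith
  have hrepr : ∀ w i, e.repr (A (G w)) i = (f (μ i) * μ i) * e.repr w i := by
    intro w i
    rw [e.repr_apply_apply, e.repr_apply_apply]
    calc ⟪e i, A (G w)⟫ = ⟪A (G (e i)), w⟫ := by rw [real_inner_comm, hAGsym]; exact real_inner_comm _ _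
    _ = ⟪(f (μ i) * μ i) • e i, w⟫ := by rw [hGe, map_smul, heig, smul_smul]
    _ = (f (μ i) * μ i) * ⟪e i, w⟫ := real_inner_smul_left _ _ _
  have hpos : ∀ u, u ≠ 0 → 0 < b (G u) u := by
    intro u hu
    rw [← hA]
    have hsum : ⟪A (G u), u⟫ = ∑ i, (f (μ i) * μ i) * (e.repr u i * e.repr u i) := by
      rw [hinner]
      refine Finset.sum_congr rfl fun i _ => ?_
      rw [hrepr]
      ring
    rw [hsum]
    have hex : ∃ i, e.repr u i ≠ 0 := by
      by_contra h
      push_neg at h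
      apply hu
      conv_lhs => rw [← e.sum_repr u]
      simp [h]
    obtain ⟨i, hi⟩ := hex
    refine Finset.sum_pos' (fun j _ => mul_nonneg (hν j).le (mul_self_nonneg _)) ?_
    exact ⟨i, Finset.mem_univ i, mul_pos (hν i) (mul_self_pos.mpr hi)⟩
  exact ⟨G, hG2, hGJ, hGb, hpos⟩

/-- Every linear generalized complex structure `𝒥` admits a compatible one `𝒥′`:
`𝒥′` commutes with `𝒥` and `⟨-𝒥𝒥′(u), u⟩ > 0` for every nonzero `u`. -/
theorem exists_compatible_linearGCS (V : Type*) [AddCommGroup V] [Module ℝ V]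
    [FiniteDimensional ℝ V]
    (J : (V × (V →ₗ[ℝ] ℝ)) →ₗ[ℝ] (V × (V →ₗ[ℝ] ℝ))) (hJ : IsLinearGCS J) :
    ∃ J' : (V × (V →ₗ[ℝ] ℝ)) →ₗ[ℝ] (V × (V →ₗ[ℝ] ℝ)),
      IsLinearGCS J' ∧
      J ∘ₗ J' = J' ∘ₗ J ∧
      ∀ u, u ≠ 0 → 0 < naturalPairing V (-(J (J' u))) u := by
  classical
  obtain ⟨hJ2, hJp⟩ := hJ
  have hJJ : ∀ u, J (J u) = -u := by
    intro u
    have := LinearMap.ext_iff.mp hJ2 u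
    simpa using this
  -- the pairing as a bilinear map
  let bW : (V × (V →ₗ[ℝ] ℝ)) →ₗ[ℝ] (V × (V →ₗ[ℝ] ℝ)) →ₗ[ℝ] ℝ :=
    LinearMap.mk₂ ℝ (fun u v => (v.2 u.1 + u.2 v.1) / 2)
      (by intro m m' nn; simp; ring)
      (by intro cc m nn; simp; ring)
      (by intro m nn nn'; simp; ring)
      (by intro cc m nn; simp; ring)
  have hbW : ∀ u v, naturalPairing V u v = bW u v := fun u v => rfl
  have hbs : ∀ u v, bW u v = bW v u := by
    intro u v
    show (v.2 u.1 + u.2 v.1) / 2 = (u.2 v.1 + v.2 u.1) / 2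
    ring
  have hbn : ∀ u, (∀ v, bW u v = 0) → u = 0 := by
    intro u h
    have h2 : u.2 = 0 := by
      ext Y
      have hY := h (Y, 0)
      have : ((0 : V →ₗ[ℝ] ℝ) u.1 + u.2 Y) / 2 = 0 := hY
      simpa using this
    have h1 : u.1 = 0 := by
      rw [← Module.forall_dual_apply_eq_zero_iff ℝ u.1]
      intro φ
      have hφ := h (0, φ)
      have : (φ u.1 + u.2 0) / 2 = 0 := hφ
      simpa using this
    exact Prod.ext h1 h2
  have hJb : ∀ u v, bW (J u) (J v) = bW u v := fun u v => by
    rw [← hbW, ← hbW]; exact hJp u v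
  -- inner product on W from a basis, made J-invariant
  let cb := Module.finBasis ℝ (V × (V →ₗ[ℝ] ℝ))
  let g0 : (V × (V →ₗ[ℝ] ℝ)) → (V × (V →ₗ[ℝ] ℝ)) → ℝ :=
    fun u v => ∑ i, cb.repr u i * cb.repr v i
  have hg0nonneg : ∀ u, 0 ≤ g0 u u :=
    fun u => Finset.sum_nonneg fun i _ => mul_self_nonneg _
  have hg0def : ∀ u, g0 u u = 0 → u = 0 := by
    intro u h
    have hall : ∀ i ∈ Finset.univ, cb.repr u i * cb.repr u i = 0 :=
      (Finset.sum_eq_zero_iff_of_nonneg fun i _ => mul_self_nonneg _).mp h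
    have : cb.repr u = 0 := by
      ext i
      exact mul_self_eq_zero.mp (hall i (Finset.mem_univ i))
    exact (LinearEquiv.map_eq_zero_iff cb.repr).mp this
  let core : InnerProductSpace.Core ℝ (V × (V →ₗ[ℝ] ℝ)) :=
  { inner := fun u v => g0 u v + g0 (J u) (J v)
    conj_inner_symm := by
      intro x y
      simp only [starRingEnd_apply, star_trivial]
      show g0 y x + g0 (J y) (J x) = g0 x y + g0 (J x) (J y)
      have hc : ∀ a b', g0 a b' = g0 b' a := by
        intro a b'
        exact Finset.sum_congr rfl fun i _ => mul_comm _ _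
      rw [hc y x, hc (J y) (J x)]
    re_inner_nonneg := by
      intro x
      have := add_nonneg (hg0nonneg x) (hg0nonneg (J x))
      simpa using this
    add_left := by
      intro x y z
      show g0 (x + y) z + g0 (J (x + y)) (J z) =
        (g0 x z + g0 (J x) (J z)) + (g0 y z + g0 (J y) (J z))
      have hadd : ∀ a b' cc', g0 (a + b') cc' = g0 a cc' + g0 b' cc' := by
        intro a b' cc'
        rw [← Finset.sum_add_distrib]
        refine Finset.sum_congr rfl fun i _ => ?_
        rw [map_add]
        simp [add_mul]
      rw [map_add, hadd, hadd]
      ring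
    smul_left := by
      intro x y r
      simp only [starRingEnd_apply, star_trivial]
      show g0 (r • x) y + g0 (J (r • x)) (J y) = r * (g0 x y + g0 (J x) (J y))
      have hsmul : ∀ (r' : ℝ) a b', g0 (r' • a) b' = r' * g0 a b' := by
        intro r' a b'
        rw [Finset.mul_sum]
        refine Finset.sum_congr rfl fun i _ => ?_
        rw [map_smul]
        simp [mul_assoc]
      rw [map_smul, hsmul, hsmul]
      ring
    definite := by
      intro x hx
      have h0 : g0 x x = 0 := by
        have := hg0nonneg x
        have := hg0nonneg (J x)
        have hx' : g0 x x + g0 (J x) (J x) = 0 := hx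
        linarith
      exact hg0def x h0 }
  letI : NormedAddCommGroup (V × (V →ₗ[ℝ] ℝ)) := core.toNormedAddCommGroup
  letI : InnerProductSpace ℝ (V × (V →ₗ[ℝ] ℝ)) := InnerProductSpace.ofCore core.toCore
  have hinner_def : ∀ u v : V × (V →ₗ[ℝ] ℝ),
      (inner ℝ u v : ℝ) = g0 u v + g0 (J u) (J v) := fun u v => rfl
  have hJi : ∀ u v : V × (V →ₗ[ℝ] ℝ), (inner ℝ (J u) (J v) : ℝ) = inner ℝ u v := by
    intro u v
    rw [hinner_def, hinner_def, hJJ, hJJ]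
    have hneg : g0 (-u) (-v) = g0 u v := by
      refine Finset.sum_congr rfl fun i _ => ?_
      rw [map_neg]
      simp
    rw [hneg]
    ring
  obtain ⟨G, hG2, hGJ, hGb, hGpos⟩ := exists_compat_G bW hbs hbn J hJJ hJb hJi
  refine ⟨G ∘ₗ J, ⟨?_, ?_⟩, ?_, ?_⟩
  · apply LinearMap.ext
    intro u
    show G (J (G (J u))) = (-LinearMap.id : _ →ₗ[ℝ] _) u
    calc G (J (G (J u))) = G (G (J (J u))) := by rw [← hGJ]
    _ = J (J u) := hG2 _
    _ = -u := hJJ u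
    _ = (-LinearMap.id : _ →ₗ[ℝ] _) u := by simp
  · intro u v
    rw [hbW, hbW]
    show bW (G (J u)) (G (J v)) = bW u v
    rw [hGb, hJb]
  · apply LinearMap.ext
    intro u
    show J (G (J u)) = G (J (J u))
    rw [hGJ, hJJ, hJJ, map_neg]
  · intro u hu
    have h1 : -(J ((G ∘ₗ J) u)) = G u := by
      show -(J (G (J u))) = G u
      rw [← hGJ, hJJ, map_neg, neg_neg]
    rw [h1, hbW]
    exact hGpos u hu
end

section
/- Let G be a compact topological group, V a finite-dimensional real vector space, W = V ⊕ V*, and ρ a continuous representation of G on W by linear maps preserving the natural pairing. Let 𝒥 be a linear generalized complex structure on V that commutes with ρ(g) for every g ∈ G. Then there exists a linear generalized complex structure 𝒥′ on V commuting with 𝒥 and with ρ(g) for every g ∈ G, such that ⟨−𝒥𝒥′(u), u⟩ > 0 for every nonzero u ∈ W. (This is the pointwise content of the lemma that a compact Lie group action preserving a generalized complex structure admits an invariant compatible generalized almost complex structure.) -/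
open scoped RealInnerProductSpace

section Aux
variable {E : Type*} [NormedAddCommGroup E] [InnerProductSpace ℝ E] [FiniteDimensional ℝ E]

theorem exists_sign_operator (P : E →ₗ[ℝ] E →ₗ[ℝ] ℝ) (hPsymm : ∀ u v, P u v = P v u)
    (A : E →ₗ[ℝ] E) (hA : ∀ u v, ⟪u, v⟫ = P (A u) v) :
    ∃ Gm : E →ₗ[ℝ] E,
      Gm ∘ₗ Gm = LinearMap.id ∧
      (∀ u v, P (Gm u) v = P u (Gm v)) ∧
      (∀ C : E →ₗ[ℝ] E, C ∘ₗ A = A ∘ₗ C → C ∘ₗ Gm = Gm ∘ₗ C) ∧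
      (∀ w, w ≠ 0 → 0 < P (Gm w) w) := by
  classical
  have hAP : ∀ u v, P (A u) v = P u (A v) := by
    intro u v
    rw [← hA, hPsymm u (A v), ← hA, real_inner_comm]
  have hAsym : (A : E →ₗ[ℝ] E).IsSymmetric := by
    intro u v
    rw [hA (A u) v, hAP, ← hA u (A v)]
  set n := Module.finrank ℝ E with hn'
  have hn : Module.finrank ℝ E = n := rfl
  set b := hAsym.eigenvectorBasis hn with hb
  set μ := hAsym.eigenvalues hn with hμ
  have hev : ∀ i, Module.End.HasEigenvector A (μ i) (b i) :=
    fun i => hAsym.hasEigenvector_eigenvectorBasis hn i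
  have hAb : ∀ i, A (b i) = μ i • b i := fun i => (hev i).apply_eq_smul
  have hμ0 : ∀ i, μ i ≠ 0 := by
    intro i h0
    have h1 : A (b i) = 0 := by rw [hAb i, h0, zero_smul]
    have h2 : ⟪b i, b i⟫ = 0 := by rw [hA, h1, map_zero, LinearMap.zero_apply]
    exact (hev i).right (inner_self_eq_zero.mp h2)
  set s : Finset ℝ := Finset.univ.image μ with hs
  set p : Polynomial ℝ := Lagrange.interpolate s id Real.sign with hp
  have hpeval : ∀ i, p.eval (μ i) = Real.sign (μ i) := by
    intro i
    have : (μ i) ∈ s := Finset.mem_image_of_mem μ (Finset.mem_univ i)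
    exact Lagrange.eval_interpolate_at_node Real.sign (Set.injOn_id _) this
  set Gm : E →ₗ[ℝ] E := Polynomial.aeval (A : Module.End ℝ E) p with hGm
  have hGb : ∀ i, Gm (b i) = Real.sign (μ i) • b i := by
    intro i
    rw [hGm, Module.End.aeval_apply_of_hasEigenvector (hev i), hpeval]
  have hsign2 : ∀ i, Real.sign (μ i) * Real.sign (μ i) = 1 := by
    intro i
    rcases Real.sign_apply_eq_of_ne_zero (μ i) (hμ0 i) with h | h <;> rw [h] <;> norm_num
  have hPbb : ∀ i j, P (b i) (b j) = (μ i)⁻¹ * (if i = j then (1:ℝ) else 0) := by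
    intro i j
    have h1 : A ((μ i)⁻¹ • b i) = b i := by
      rw [map_smul, hAb i, smul_smul, inv_mul_cancel₀ (hμ0 i), one_smul]
    calc P (b i) (b j) = P (A ((μ i)⁻¹ • b i)) (b j) := by rw [h1]
      _ = ⟪(μ i)⁻¹ • b i, b j⟫ := (hA _ _).symm
      _ = (μ i)⁻¹ * ⟪b i, b j⟫ := real_inner_smul_left _ _ _
      _ = (μ i)⁻¹ * (if i = j then (1:ℝ) else 0) := by
          rw [orthonormal_iff_ite.mp b.orthonormal i j]
  refine ⟨Gm, ?_, ?_, ?_, ?_⟩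
  · -- involution
    apply b.toBasis.ext
    intro i
    simp only [LinearMap.comp_apply, OrthonormalBasis.coe_toBasis, LinearMap.id_apply]
    rw [hGb i, map_smul, hGb i, smul_smul, hsign2 i, one_smul]
  · -- P-symmetry of Gm
    have hpow : ∀ k : ℕ, ∀ u v : E, P (((A : Module.End ℝ E) ^ k) u) v
        = P u (((A : Module.End ℝ E) ^ k) v) := by
      intro k
      induction k with
      | zero => intro u v; simp
      | succ k ih =>
        intro u v
        calc P ((A ^ (k+1)) u) v = P ((A ^ k) (A u)) v := by
              rw [pow_succ, Module.End.mul_apply]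
          _ = P (A u) ((A ^ k) v) := ih _ _
          _ = P u (A ((A ^ k) v)) := hAP _ _
          _ = P u ((A ^ (k+1)) v) := by rw [pow_succ', Module.End.mul_apply]
    have key : ∀ q : Polynomial ℝ, ∀ u v,
        P ((Polynomial.aeval (A : Module.End ℝ E) q) u) v
          = P u ((Polynomial.aeval (A : Module.End ℝ E) q) v) := by
      intro q
      induction q using Polynomial.induction_on' with
      | add q r hq hr =>
        intro u v
        simp only [map_add, LinearMap.add_apply, LinearMap.map_add]
        rw [hq, hr]
      | monomial m c =>
        intro u v
        simp only [Polynomial.aeval_monomial, Module.End.mul_apply,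
          Module.algebraMap_end_apply, map_smul, LinearMap.smul_apply, smul_eq_mul]
        rw [hpow m]
    intro u v; exact key p u v
  · -- commuting
    intro C hC
    have hC' : Commute (C : Module.End ℝ E) (A : Module.End ℝ E) := hC
    have hcom : Commute (C : Module.End ℝ E) (Polynomial.aeval (A : Module.End ℝ E) p) := by
      induction p using Polynomial.induction_on' with
      | add q r hq hr =>
        rw [map_add]; exact hq.add_right hr
      | monomial m c =>
        rw [Polynomial.aeval_monomial]
        exact (Algebra.commute_algebraMap_right c C).mul_right (hC'.pow_right m)
    exact hcom
  · -- positivity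
    intro w hw
    set c : Fin n → ℝ := fun i => b.repr w i with hc
    have hwsum : ∑ i, c i • b i = w := b.sum_repr w
    have hGw : Gm w = ∑ i, (c i * Real.sign (μ i)) • b i := by
      rw [← hwsum, map_sum]
      refine Finset.sum_congr rfl fun i _ => ?_
      rw [map_smul, hGb i, smul_smul]
    have hcne : ∃ i, c i ≠ 0 := by
      by_contra h
      push_neg at h
      apply hw
      rw [← hwsum]
      simp [h]
    have hcalc : P (Gm w) w = ∑ i, (c i * Real.sign (μ i)) * (c i * (μ i)⁻¹) := by
      rw [hGw]
      nth_rewrite 1 [← hwsum]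
      simp only [map_sum, LinearMap.sum_apply, LinearMap.map_smul, LinearMap.smul_apply,
        smul_eq_mul]
      rw [Finset.sum_comm]
      refine Finset.sum_congr rfl fun i _ => ?_
      have hterms : ∀ x ∈ Finset.univ, c i * (μ i).sign * (c x * (P (b i)) (b x))
          = if i = x then (c i * Real.sign (μ i)) * (c i * (μ i)⁻¹) else 0 := by
        intro x _
        rw [hPbb i x]
        by_cases h : i = x
        · subst h; simp
        · simp [h]
      rw [Finset.sum_congr rfl hterms, Finset.sum_ite_eq Finset.univ i
        (fun _ => (c i * Real.sign (μ i)) * (c i * (μ i)⁻¹))]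
      simp
    rw [hcalc]
    have hterm : ∀ i, 0 ≤ (c i * Real.sign (μ i)) * (c i * (μ i)⁻¹) := by
      intro i
      have : (c i * Real.sign (μ i)) * (c i * (μ i)⁻¹)
          = (c i)^2 * (Real.sign (μ i) * (μ i)⁻¹) := by ring
      rw [this]
      apply mul_nonneg (sq_nonneg _)
      rcases lt_or_gt_of_ne (hμ0 i) with h | h
      · rw [Real.sign_of_neg h]
        have h2 : (μ i)⁻¹ < 0 := inv_lt_zero.mpr h
        nlinarith
      · rw [Real.sign_of_pos h]
        have h2 : 0 < (μ i)⁻¹ := inv_pos.mpr h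
        nlinarith
    have hterm' : ∀ i, c i ≠ 0 → 0 < (c i * Real.sign (μ i)) * (c i * (μ i)⁻¹) := by
      intro i hci
      have h3 : (c i * Real.sign (μ i)) * (c i * (μ i)⁻¹)
          = (c i)^2 * (Real.sign (μ i) * (μ i)⁻¹) := by ring
      rw [h3]
      have h4 : (0:ℝ) < (c i)^2 := by positivity
      refine mul_pos h4 ?_
      rcases lt_or_gt_of_ne (hμ0 i) with h | h
      · rw [Real.sign_of_neg h]
        have h2 : (μ i)⁻¹ < 0 := inv_lt_zero.mpr h
        nlinarith
      · rw [Real.sign_of_pos h]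
        have h2 : 0 < (μ i)⁻¹ := inv_pos.mpr h
        nlinarith
    obtain ⟨i0, hi0⟩ := hcne
    exact Finset.sum_pos' (fun i _ => hterm i) ⟨i0, Finset.mem_univ i0, hterm' i0 hi0⟩
end Aux

set_option maxHeartbeats 2000000

/-- If a compact group `G` acts on `W = V ⊕ V*` by a continuous representation `ρ`
(continuity stated weakly, i.e. via all linear functionals, which is equivalent in finite
dimensions) preserving the natural pairing, and `𝒥` is a `ρ`-invariant linear generalized
complex structure, then there is a `ρ`-invariant compatible `𝒥′`. -/
theorem exists_invariant_compatible_linearGCS (G : Type*) [Group G] [TopologicalSpace G]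
    [IsTopologicalGroup G] [CompactSpace G]
    (V : Type*) [AddCommGroup V] [Module ℝ V] [FiniteDimensional ℝ V]
    (ρ : G →* ((V × (V →ₗ[ℝ] ℝ)) →ₗ[ℝ] (V × (V →ₗ[ℝ] ℝ))))
    (hcont : ∀ (w : V × (V →ₗ[ℝ] ℝ)) (φ : (V × (V →ₗ[ℝ] ℝ)) →ₗ[ℝ] ℝ),
      Continuous fun g : G => φ (ρ g w))
    (hpair : ∀ (g : G) (u v : V × (V →ₗ[ℝ] ℝ)),
      naturalPairing V (ρ g u) (ρ g v) = naturalPairing V u v)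
    (J : (V × (V →ₗ[ℝ] ℝ)) →ₗ[ℝ] (V × (V →ₗ[ℝ] ℝ))) (hJ : IsLinearGCS J)
    (hJρ : ∀ g : G, J ∘ₗ ρ g = ρ g ∘ₗ J) :
    ∃ J' : (V × (V →ₗ[ℝ] ℝ)) →ₗ[ℝ] (V × (V →ₗ[ℝ] ℝ)),
      IsLinearGCS J' ∧
      J ∘ₗ J' = J' ∘ₗ J ∧
      (∀ g : G, J' ∘ₗ ρ g = ρ g ∘ₗ J') ∧
      ∀ u, u ≠ 0 → 0 < naturalPairing V (-(J (J' u))) u := by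
  classical
  -- pointwise consequences of `hJ`
  have hJJ : ∀ u, J (J u) = -u := by
    intro u
    have := LinearMap.ext_iff.mp hJ.1 u
    simpa using this
  have hJρ' : ∀ (g : G) u, J (ρ g u) = ρ g (J u) := by
    intro g u
    have := LinearMap.ext_iff.mp (hJρ g) u
    simpa using this
  -- the pairing as a bilinear map
  set Pb : (V × (V →ₗ[ℝ] ℝ)) →ₗ[ℝ] (V × (V →ₗ[ℝ] ℝ)) →ₗ[ℝ] ℝ :=
    LinearMap.mk₂ ℝ (fun u v => naturalPairing V u v)
      (by intro u u' v; simp only [naturalPairing, Prod.fst_add, Prod.snd_add,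
            map_add, LinearMap.add_apply]; ring)
      (by intro c u v; simp only [naturalPairing, Prod.smul_fst, Prod.smul_snd,
            map_smul, LinearMap.smul_apply, smul_eq_mul]; ring)
      (by intro u v v'; simp only [naturalPairing, Prod.fst_add, Prod.snd_add,
            map_add, LinearMap.add_apply]; ring)
      (by intro c u v; simp only [naturalPairing, Prod.smul_fst, Prod.smul_snd,
            map_smul, LinearMap.smul_apply, smul_eq_mul]; ring) with hPbdef
  have hPb : ∀ u v, Pb u v = naturalPairing V u v := fun _ _ => rfl
  have hPbsymm : ∀ u v, Pb u v = Pb v u := by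
    intro u v; simp only [hPb, naturalPairing]; ring
  -- nondegeneracy of the pairing
  have hnd : ∀ w : V × (V →ₗ[ℝ] ℝ), (∀ v, Pb w v = 0) → w = 0 := by
    intro w h
    have hX : w.1 = 0 := by
      rw [← Module.forall_dual_apply_eq_zero_iff ℝ w.1]
      intro η
      have h1 := h (0, η)
      simp only [hPb, naturalPairing, map_zero, add_zero] at h1
      linarith
    have hxi : w.2 = 0 := by
      apply LinearMap.ext
      intro Y
      have h1 := h (Y, 0)
      simp only [hPb, naturalPairing, LinearMap.zero_apply, zero_add] at h1
      simpa using by linarith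
    exact Prod.ext hX hxi
  -- Haar measure setup
  letI : MeasurableSpace G := borel G
  haveI : BorelSpace G := ⟨rfl⟩
  have hne : (interior (Set.univ : Set G)).Nonempty := by
    rw [interior_univ]; exact ⟨1, trivial⟩
  set K₀ : TopologicalSpace.PositiveCompacts G := ⟨⟨Set.univ, isCompact_univ⟩, hne⟩ with hK₀
  set μ : MeasureTheory.Measure G := MeasureTheory.Measure.haarMeasure K₀ with hμdef
  have hμuniv : μ Set.univ = 1 := by
    exact MeasureTheory.Measure.haarMeasure_self (K₀ := K₀)
  haveI : MeasureTheory.IsProbabilityMeasure μ := ⟨hμuniv⟩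
  haveI : μ.IsOpenPosMeasure :=
    MeasureTheory.isOpenPosMeasure_of_mulLeftInvariant_of_compact Set.univ isCompact_univ
      (by rw [hμuniv]; exact one_ne_zero)
  -- a reference basis and positive bilinear form on W
  set bW := Module.finBasis ℝ (V × (V →ₗ[ℝ] ℝ)) with hbW
  set B0 : (V × (V →ₗ[ℝ] ℝ)) →ₗ[ℝ] (V × (V →ₗ[ℝ] ℝ)) →ₗ[ℝ] ℝ :=
    LinearMap.mk₂ ℝ (fun u v => ∑ i, bW.repr u i * bW.repr v i)
      (by intro u u' v; simp only [map_add, Finsupp.add_apply, add_mul]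
          rw [Finset.sum_add_distrib])
      (by intro c u v; simp only [map_smul, Finsupp.smul_apply, smul_eq_mul,
            Finset.mul_sum, mul_assoc])
      (by intro u v v'; simp only [map_add, Finsupp.add_apply, mul_add]
          rw [Finset.sum_add_distrib])
      (by intro c u v; simp only [map_smul, Finsupp.smul_apply, smul_eq_mul,
            Finset.mul_sum]
          refine Finset.sum_congr rfl fun i _ => by ring) with hB0def
  have hB0 : ∀ u v, B0 u v = ∑ i, bW.repr u i * bW.repr v i := fun _ _ => rfl
  have hB0symm : ∀ u v, B0 u v = B0 v u := by
    intro u v; simp only [hB0]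
    exact Finset.sum_congr rfl fun i _ => mul_comm _ _
  have hB0nonneg : ∀ u, 0 ≤ B0 u u := by
    intro u; rw [hB0]
    exact Finset.sum_nonneg fun i _ => mul_self_nonneg _
  have hB0pos : ∀ u, u ≠ 0 → 0 < B0 u u := by
    intro u hu
    have h1 : bW.repr u ≠ 0 := by
      intro h
      exact hu (by simpa using congrArg bW.repr.symm h)
    obtain ⟨i, hi⟩ := Finsupp.ne_iff.mp h1
    rw [hB0]
    refine Finset.sum_pos' (fun j _ => mul_self_nonneg _) ⟨i, Finset.mem_univ i, ?_⟩
    exact mul_self_pos.mpr hi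
  -- continuity and integrability of the averaged integrands
  have hrep : ∀ (u : V × (V →ₗ[ℝ] ℝ)) (i), Continuous fun g : G => bW.repr (ρ g u) i := by
    intro u i
    have := hcont u (bW.coord i)
    simpa [Module.Basis.coord_apply] using this
  have hcont2 : ∀ u v, Continuous fun g : G => B0 (ρ g⁻¹ u) (ρ g⁻¹ v) := by
    intro u v
    have heq : (fun g : G => B0 (ρ g⁻¹ u) (ρ g⁻¹ v))
        = fun g => ∑ i, bW.repr (ρ g⁻¹ u) i * bW.repr (ρ g⁻¹ v) i := rfl
    rw [heq]
    apply continuous_finset_sum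
    intro i _
    exact ((hrep u i).comp continuous_inv).mul ((hrep v i).comp continuous_inv)
  have hint : ∀ u v, MeasureTheory.Integrable (fun g => B0 (ρ g⁻¹ u) (ρ g⁻¹ v)) μ := by
    intro u v
    exact (hcont2 u v).integrable_of_hasCompactSupport ((isClosed_tsupport _).isCompact)
  -- the averaged bilinear form
  set B1 : (V × (V →ₗ[ℝ] ℝ)) →ₗ[ℝ] (V × (V →ₗ[ℝ] ℝ)) →ₗ[ℝ] ℝ :=
    LinearMap.mk₂ ℝ (fun u v => ∫ g, B0 (ρ g⁻¹ u) (ρ g⁻¹ v) ∂μ)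
      (by intro u u' v
          skip
          have heq : (fun g : G => B0 (ρ g⁻¹ (u + u')) (ρ g⁻¹ v))
              = fun g => B0 (ρ g⁻¹ u) (ρ g⁻¹ v) + B0 (ρ g⁻¹ u') (ρ g⁻¹ v) := by
            funext g; simp [map_add]
          rw [heq, MeasureTheory.integral_add (hint u v) (hint u' v)])
      (by intro c u v
          skip
          have heq : (fun g : G => B0 (ρ g⁻¹ (c • u)) (ρ g⁻¹ v))
              = fun g => c * B0 (ρ g⁻¹ u) (ρ g⁻¹ v) := by
            funext g; simp [map_smul]
          rw [heq, MeasureTheory.integral_const_mul]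
          simp)
      (by intro u v v'
          skip
          have heq : (fun g : G => B0 (ρ g⁻¹ u) (ρ g⁻¹ (v + v')))
              = fun g => B0 (ρ g⁻¹ u) (ρ g⁻¹ v) + B0 (ρ g⁻¹ u) (ρ g⁻¹ v') := by
            funext g; simp [map_add]
          rw [heq, MeasureTheory.integral_add (hint u v) (hint u v')])
      (by intro c u v
          skip
          have heq : (fun g : G => B0 (ρ g⁻¹ u) (ρ g⁻¹ (c • v)))
              = fun g => c * B0 (ρ g⁻¹ u) (ρ g⁻¹ v) := by
            funext g; simp [map_smul]
          rw [heq, MeasureTheory.integral_const_mul]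
          simp) with hB1def
  have hB1 : ∀ u v, B1 u v = ∫ g, B0 (ρ g⁻¹ u) (ρ g⁻¹ v) ∂μ := fun _ _ => rfl
  have hB1symm : ∀ u v, B1 u v = B1 v u := by
    intro u v; rw [hB1, hB1]
    exact MeasureTheory.integral_congr_ae (Filter.Eventually.of_forall fun g => hB0symm _ _)
  have hB1nonneg : ∀ u, 0 ≤ B1 u u := by
    intro u; rw [hB1]
    exact MeasureTheory.integral_nonneg fun g => hB0nonneg _
  have hB1pos : ∀ u, u ≠ 0 → 0 < B1 u u := by
    intro u hu
    rw [hB1]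
    rw [MeasureTheory.integral_pos_iff_support_of_nonneg (fun g => hB0nonneg _) (hint u u)]
    have hopen : IsOpen {g : G | 0 < B0 (ρ g⁻¹ u) (ρ g⁻¹ u)} :=
      isOpen_lt continuous_const (hcont2 u u)
    have h1 : (1 : G) ∈ {g : G | 0 < B0 (ρ g⁻¹ u) (ρ g⁻¹ u)} := by
      have : ρ (1 : G)⁻¹ u = u := by simp [map_one]
      simpa [this] using hB0pos u hu
    have hsub : {g : G | 0 < B0 (ρ g⁻¹ u) (ρ g⁻¹ u)}
        ⊆ Function.support fun g => B0 (ρ g⁻¹ u) (ρ g⁻¹ u) := by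
      intro g hg; exact ne_of_gt hg
    exact lt_of_lt_of_le (hopen.measure_pos μ ⟨1, h1⟩) (MeasureTheory.measure_mono hsub)
  have hB1inv : ∀ (h : G) u v, B1 (ρ h u) (ρ h v) = B1 u v := by
    intro h u v
    have heq : (fun g : G => B0 (ρ g⁻¹ (ρ h u)) (ρ g⁻¹ (ρ h v)))
        = fun g => B0 (ρ (h⁻¹ * g)⁻¹ u) (ρ (h⁻¹ * g)⁻¹ v) := by
      funext g
      have : ∀ w, ρ g⁻¹ (ρ h w) = ρ (h⁻¹ * g)⁻¹ w := by
        intro w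
        rw [mul_inv_rev, inv_inv, map_mul]
        rfl
      rw [this u, this v]
    rw [hB1, heq,
      MeasureTheory.integral_mul_left_eq_self (fun g => B0 (ρ g⁻¹ u) (ρ g⁻¹ v)) h⁻¹, ← hB1]
  -- make it J-invariant
  set B2 : (V × (V →ₗ[ℝ] ℝ)) →ₗ[ℝ] (V × (V →ₗ[ℝ] ℝ)) →ₗ[ℝ] ℝ :=
    B1 + B1.compl₁₂ J J with hB2def
  have hB2 : ∀ u v, B2 u v = B1 u v + B1 (J u) (J v) := by
    intro u v; simp [hB2def, LinearMap.compl₁₂_apply]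
  have hB2symm : ∀ u v, B2 u v = B2 v u := by
    intro u v; rw [hB2, hB2, hB1symm u v, hB1symm (J u) (J v)]
  have hB2nonneg : ∀ u, 0 ≤ B2 u u := by
    intro u; rw [hB2]
    exact add_nonneg (hB1nonneg u) (hB1nonneg (J u))
  have hB2pos : ∀ u, u ≠ 0 → 0 < B2 u u := by
    intro u hu; rw [hB2]
    exact add_pos_of_pos_of_nonneg (hB1pos u hu) (hB1nonneg (J u))
  have hB2J : ∀ u v, B2 (J u) (J v) = B2 u v := by
    intro u v
    rw [hB2, hB2, hJJ u, hJJ v]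
    have : B1 (-u) (-v) = B1 u v := by simp
    rw [this, add_comm]
  have hB2ρ : ∀ (g : G) u v, B2 (ρ g u) (ρ g v) = B2 u v := by
    intro g u v
    rw [hB2, hB2, hB1inv g u v, hJρ' g u, hJρ' g v, hB1inv g (J u) (J v)]
  -- inner product space structure from B2
  letI core : InnerProductSpace.Core ℝ (V × (V →ₗ[ℝ] ℝ)) :=
    { inner := fun u v => B2 u v
      conj_inner_symm := fun x y => by
        simp only [starRingEnd_apply, star_trivial]
        exact hB2symm y x
      re_inner_nonneg := fun x => by
        simpa using hB2nonneg x
      add_left := fun x y z => by simp [map_add]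
      smul_left := fun x y r => by
        simp only [map_smul, LinearMap.smul_apply, smul_eq_mul, starRingEnd_apply,
          star_trivial]
      definite := fun x hx => by
        by_contra h
        exact (ne_of_gt (hB2pos x h)) hx }
  letI : NormedAddCommGroup (V × (V →ₗ[ℝ] ℝ)) :=
    @InnerProductSpace.Core.toNormedAddCommGroup ℝ _ _ _ _ core
  letI : InnerProductSpace ℝ (V × (V →ₗ[ℝ] ℝ)) := InnerProductSpace.ofCore core.toCore
  have hinner : ∀ u v : V × (V →ₗ[ℝ] ℝ), ⟪u, v⟫ = B2 u v := fun _ _ => rfl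
  -- the operator A relating the pairing and B2
  have hndPb : LinearMap.BilinForm.Nondegenerate Pb :=
    ⟨hnd, fun w h => hnd w (fun v => by rw [hPbsymm]; exact h v)⟩
  set e := LinearMap.BilinForm.toDual Pb hndPb with hedef
  set A : (V × (V →ₗ[ℝ] ℝ)) →ₗ[ℝ] (V × (V →ₗ[ℝ] ℝ)) :=
    (e.symm : Module.Dual ℝ (V × (V →ₗ[ℝ] ℝ)) →ₗ[ℝ] (V × (V →ₗ[ℝ] ℝ))) ∘ₗ B2 with hAdef
  have hArel : ∀ u v, B2 u v = Pb (A u) v := by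
    intro u v
    have h1 : Pb (A u) v = (e (A u)) v := rfl
    have h2 : e (A u) = B2 u := by
      show e (e.symm (B2 u)) = B2 u
      exact e.apply_symm_apply _
    rw [h1, h2]
  -- operators preserving both forms commute with A
  have hcomm : ∀ C D : (V × (V →ₗ[ℝ] ℝ)) →ₗ[ℝ] (V × (V →ₗ[ℝ] ℝ)),
      (∀ v, C (D v) = v) →
      (∀ u v, Pb (C u) (C v) = Pb u v) → (∀ u v, B2 (C u) (C v) = B2 u v) →
      C ∘ₗ A = A ∘ₗ C := by
    intro C D hCD hPinv hBinv
    apply LinearMap.ext; intro u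
    have hz : ∀ v, Pb (C (A u) - A (C u)) v = 0 := by
      intro v
      have h1 : Pb (C (A u)) v = B2 u (D v) := by
        conv_lhs => rw [← hCD v]
        rw [hPinv, ← hArel]
      have h2 : Pb (A (C u)) v = B2 u (D v) := by
        rw [← hArel]
        conv_lhs => rw [← hCD v]
        rw [hBinv]
      rw [map_sub, LinearMap.sub_apply, h1, h2, sub_self]
    have h3 := sub_eq_zero.mp (hnd _ hz)
    simpa [LinearMap.comp_apply] using h3
  -- apply the spectral lemma
  obtain ⟨Gm, hGm1, hGm2, hGm3, hGm4⟩ :=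
    exists_sign_operator Pb hPbsymm A (fun u v => hArel u v)
  have hGminv : ∀ u, Gm (Gm u) = u := by
    intro u
    have := LinearMap.ext_iff.mp hGm1 u
    simpa using this
  -- J commutes with A
  have hJA : J ∘ₗ A = A ∘ₗ J :=
    hcomm J (-J) (fun v => by simp [hJJ v]) (fun u v => hJ.2 u v) hB2J
  have hρA : ∀ g : G, ρ g ∘ₗ A = A ∘ₗ ρ g := by
    intro g
    refine hcomm (ρ g) (ρ g⁻¹) (fun v => ?_) (fun u v => hpair g u v) (fun u v => hB2ρ g u v)
    have : ρ g * ρ g⁻¹ = 1 := by rw [← map_mul, mul_inv_cancel, map_one]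
    calc (ρ g) ((ρ g⁻¹) v) = (ρ g * ρ g⁻¹) v := rfl
      _ = v := by rw [this]; rfl
  have hGmJ : J ∘ₗ Gm = Gm ∘ₗ J := hGm3 J hJA
  have hGmJ' : ∀ u, J (Gm u) = Gm (J u) := by
    intro u
    have := LinearMap.ext_iff.mp hGmJ u
    simpa using this
  have hGmρ : ∀ g : G, ρ g ∘ₗ Gm = Gm ∘ₗ ρ g := fun g => hGm3 (ρ g) (hρA g)
  have hGmρ' : ∀ (g : G) u, ρ g (Gm u) = Gm (ρ g u) := by
    intro g u
    have := LinearMap.ext_iff.mp (hGmρ g) u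
    simpa using this
  -- the compatible structure
  refine ⟨Gm ∘ₗ J, ⟨?_, ?_⟩, ?_, ?_, ?_⟩
  · -- (Gm ∘ J)² = -1
    apply LinearMap.ext; intro u
    simp only [LinearMap.comp_apply, LinearMap.neg_apply, LinearMap.id_apply]
    rw [hGmJ' (J u), hGminv (J (J u)), hJJ u]
  · -- pairing preserved
    intro u v
    rw [← hPb, ← hPb]
    simp only [LinearMap.comp_apply]
    rw [hGm2, hGminv]
    rw [hPb, hPb]
    exact hJ.2 u v
  · -- commutes with J
    apply LinearMap.ext; intro u
    simp only [LinearMap.comp_apply]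
    exact hGmJ' (J u)
  · -- commutes with ρ
    intro g
    apply LinearMap.ext; intro u
    simp only [LinearMap.comp_apply]
    rw [hJρ' g u, ← hGmρ' g (J u)]
  · -- positivity
    intro u hu
    have hJu : J u ≠ 0 := by
      intro h
      apply hu
      have h5 := hJJ u
      rw [h, map_zero] at h5
      exact neg_eq_zero.mp h5.symm
    have h3 := hJ.2 (-(Gm (J u))) (-(J u))
    rw [map_neg, map_neg, hJJ u, neg_neg] at h3
    have h4 : naturalPairing V (-(Gm (J u))) (-(J u)) = Pb (Gm (J u)) (J u) := by
      rw [← hPb]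
      simp [map_neg, LinearMap.neg_apply]
    simp only [LinearMap.comp_apply]
    rw [h3, h4]
    exact hGm4 (J u) hJu
end

section
/- Let V be a finite-dimensional real vector space, g an inner product on V viewed as an isomorphism g : V → V*, and J : V → V a linear map with J² = −id which is orthogonal for g. Set ω := g ∘ J : V → V*, which is skew and invertible. Then the linear generalized complex structures 𝒥_J(X + ξ) = J(X) − J*(ξ) and 𝒥_ω(X + ξ) = −ω⁻¹(ξ) + ω(X) commute, and 𝒢 := −𝒥_J 𝒥_ω is given by 𝒢(X + ξ) = g⁻¹(ξ) + g(X) and satisfies ⟨𝒢(u), u⟩ > 0 for every nonzero u ∈ V ⊕ V*. In particular (𝒥_J, 𝒥_ω) is a linear generalized Kähler pair. -/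
/-- The generalized complex structure `𝒥_J(X + ξ) = J(X) - J*(ξ)` associated to a
complex structure `J` on `V`. -/
noncomputable def gcsOfComplex {V : Type*} [AddCommGroup V] [Module ℝ V]
    (J : V →ₗ[ℝ] V) : (V × (V →ₗ[ℝ] ℝ)) →ₗ[ℝ] (V × (V →ₗ[ℝ] ℝ)) :=
  LinearMap.prodMap J (-(LinearMap.dualMap J))

/-- The generalized complex structure `𝒥_ω(X + ξ) = -ω⁻¹(ξ) + ω(X)` associated to an
invertible skew map `ω : V → V*` with given inverse `ωinv`. -/
noncomputable def gcsOfSymplectic' {V : Type*} [AddCommGroup V] [Module ℝ V]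
    (ω : V →ₗ[ℝ] (V →ₗ[ℝ] ℝ)) (ωinv : (V →ₗ[ℝ] ℝ) →ₗ[ℝ] V) :
    (V × (V →ₗ[ℝ] ℝ)) →ₗ[ℝ] (V × (V →ₗ[ℝ] ℝ)) :=
  LinearMap.prod
    (-(ωinv ∘ₗ LinearMap.snd ℝ V (V →ₗ[ℝ] ℝ)))
    (ω ∘ₗ LinearMap.fst ℝ V (V →ₗ[ℝ] ℝ))

/-- For an inner product `g` on `V` (viewed as an isomorphism `g : V → V*`) and a complex
structure `J` orthogonal for `g`, the map `ω = g ∘ J` is skew and invertible, `𝒥_J` and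
`𝒥_ω` commute, and `𝒢 = -𝒥_J 𝒥_ω` is given by `𝒢(X + ξ) = g⁻¹(ξ) + g(X)` and satisfies
`⟨𝒢(u), u⟩ > 0` for all nonzero `u`; in particular `(𝒥_J, 𝒥_ω)` is a linear generalized
Kähler pair. -/
theorem kaehler_pair_of_complex_and_metric (V : Type*) [AddCommGroup V] [Module ℝ V]
    [FiniteDimensional ℝ V]
    (g : V ≃ₗ[ℝ] (V →ₗ[ℝ] ℝ))
    (hsymm : ∀ x y : V, g x y = g y x)
    (hpos : ∀ x : V, x ≠ 0 → 0 < g x x)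
    (J : V →ₗ[ℝ] V) (hJ : J ∘ₗ J = -LinearMap.id)
    (horth : ∀ x y : V, g (J x) (J y) = g x y) :
    (∀ X Y : V, (g.toLinearMap ∘ₗ J) X Y = -((g.toLinearMap ∘ₗ J) Y X)) ∧
    Function.Bijective (g.toLinearMap ∘ₗ J) ∧
    ∀ ωinv : (V →ₗ[ℝ] ℝ) →ₗ[ℝ] V,
      ωinv ∘ₗ (g.toLinearMap ∘ₗ J) = LinearMap.id →
      (g.toLinearMap ∘ₗ J) ∘ₗ ωinv = LinearMap.id →
        IsLinearGCS (gcsOfComplex J) ∧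
        IsLinearGCS (gcsOfSymplectic' (g.toLinearMap ∘ₗ J) ωinv) ∧
        gcsOfComplex J ∘ₗ gcsOfSymplectic' (g.toLinearMap ∘ₗ J) ωinv =
          gcsOfSymplectic' (g.toLinearMap ∘ₗ J) ωinv ∘ₗ gcsOfComplex J ∧
        (∀ u : V × (V →ₗ[ℝ] ℝ),
          (-(gcsOfComplex J ∘ₗ gcsOfSymplectic' (g.toLinearMap ∘ₗ J) ωinv)) u =
            (g.symm u.2, g u.1)) ∧
        ∀ u : V × (V →ₗ[ℝ] ℝ), u ≠ 0 →
          0 < naturalPairing V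
            ((-(gcsOfComplex J ∘ₗ gcsOfSymplectic' (g.toLinearMap ∘ₗ J) ωinv)) u) u := by
  have hJJ : ∀ x : V, J (J x) = -x := by
    intro x
    have := LinearMap.ext_iff.mp hJ x
    simpa using this
  have hskew : ∀ X Y : V, (g.toLinearMap ∘ₗ J) X Y = -((g.toLinearMap ∘ₗ J) Y X) := by
    intro X Y
    have h1 := horth X (J Y)
    rw [hJJ Y] at h1
    simp only [map_neg, LinearMap.neg_apply] at h1
    simp only [LinearMap.comp_apply, LinearEquiv.coe_coe]
    have h2 : g X (J Y) = g (J Y) X := hsymm X (J Y)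
    linarith [h1, h2]
  have hJbij : Function.Bijective J := by
    rw [Function.bijective_iff_has_inverse]
    exact ⟨fun x => -(J x), fun x => by simp [hJJ x], fun x => by simp [hJJ x]⟩
  have hωbij : Function.Bijective (g.toLinearMap ∘ₗ J) := by
    have : ⇑(g.toLinearMap ∘ₗ J) = ⇑g ∘ ⇑J := rfl
    rw [this]
    exact g.bijective.comp hJbij
  refine ⟨hskew, hωbij, ?_⟩
  intro ωinv hinv1 hinv2
  have hinv1' : ∀ x : V, ωinv (g (J x)) = x := by
    intro x
    have := LinearMap.ext_iff.mp hinv1 x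
    simpa using this
  have hinv2' : ∀ ξ : V →ₗ[ℝ] ℝ, g (J (ωinv ξ)) = ξ := by
    intro ξ
    have := LinearMap.ext_iff.mp hinv2 ξ
    simpa using this
  constructor
  · -- IsLinearGCS (gcsOfComplex J)
    constructor
    · ext u <;> simp [gcsOfComplex, hJJ]
    · intro u v
      simp [gcsOfComplex, naturalPairing, LinearMap.dualMap_apply, hJJ]
  constructor
  · -- IsLinearGCS (gcsOfSymplectic')
    constructor
    · ext u <;> simp [gcsOfSymplectic', hinv1', hinv2']
    · intro u v
      simp only [gcsOfSymplectic', naturalPairing, LinearMap.prod_apply, Function.prod,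
        LinearMap.neg_apply, LinearMap.comp_apply, LinearMap.snd_apply, LinearMap.fst_apply,
        LinearEquiv.coe_coe, map_neg]
      have h1 : g (J u.1) (ωinv v.2) = -(v.2 u.1) := by
        have := hskew u.1 (ωinv v.2)
        simp only [LinearMap.comp_apply, LinearEquiv.coe_coe] at this
        rw [this, hinv2' v.2]
      have h2 : g (J v.1) (ωinv u.2) = -(u.2 v.1) := by
        have := hskew v.1 (ωinv u.2)
        simp only [LinearMap.comp_apply, LinearEquiv.coe_coe] at this
        rw [this, hinv2' u.2]
      rw [h1, h2]; ring
  have hωJ : ∀ x : V, g (J (J x)) = -((g (J x)) ∘ₗ J) := by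
    intro x
    ext y
    simp only [LinearMap.neg_apply, LinearMap.comp_apply]
    rw [hJJ x]
    have := horth x y
    have h3 : g (J x) (J y) = g x y := this
    simp only [map_neg, LinearMap.neg_apply]
    rw [h3]
  have hcomm1 : ∀ ξ : V →ₗ[ℝ] ℝ, -(J (ωinv ξ)) = ωinv (ξ ∘ₗ J) := by
    intro ξ
    have hinj : Function.Injective (fun x : V => g (J x)) := hωbij.injective
    apply hinj
    show g (J (-(J (ωinv ξ)))) = g (J (ωinv (ξ ∘ₗ J)))
    rw [hinv2' (ξ ∘ₗ J)]
    simp only [map_neg]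
    have := hωJ (ωinv ξ)
    rw [this, hinv2' ξ]
    simp
  refine ⟨?_, ?_, ?_⟩
  · -- commute
    refine LinearMap.ext fun u => Prod.ext ?_ ?_
    · simp only [LinearMap.comp_apply, gcsOfComplex, gcsOfSymplectic', LinearMap.prodMap_apply,
        LinearMap.prod_apply, Function.prod, LinearMap.neg_apply, LinearMap.snd_apply,
        LinearMap.fst_apply, LinearEquiv.coe_coe, map_neg, Prod.map_fst]
      rw [neg_neg]
      exact hcomm1 u.2
    · simp only [LinearMap.comp_apply, gcsOfComplex, gcsOfSymplectic', LinearMap.prodMap_apply,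
        LinearMap.prod_apply, Function.prod, LinearMap.neg_apply, LinearMap.snd_apply,
        LinearMap.fst_apply, LinearEquiv.coe_coe, LinearMap.dualMap_apply, Prod.map_snd]
      have := hωJ u.1
      ext y
      have hy := LinearMap.ext_iff.mp this y
      simp only [LinearMap.neg_apply, LinearMap.comp_apply, LinearMap.dualMap_apply] at hy ⊢
      linarith [hy]
  · -- formula for 𝒢
    intro u
    have h1 : J (ωinv u.2) = g.symm u.2 := by
      apply g.injective
      rw [hinv2' u.2, g.apply_symm_apply]
    have h2 : (g (J u.1)) ∘ₗ J = g u.1 := by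
      ext y
      simp only [LinearMap.comp_apply]
      rw [horth u.1 y]
    simp only [LinearMap.neg_apply, LinearMap.comp_apply, gcsOfComplex, gcsOfSymplectic',
      LinearMap.prodMap_apply, LinearMap.prod_apply, Pi.prod, LinearMap.snd_apply,
      LinearMap.fst_apply, LinearEquiv.coe_coe, map_neg, LinearMap.dualMap_apply, Prod.neg_mk]
    rw [Prod.ext_iff]
    constructor
    · simpa using h1
    · show -(-(g (J u.1) ∘ₗ J)) = g.toLinearMap u.1
      rw [neg_neg, h2]; rfl
  · -- positivity
    intro u hu
    have hform : (-(gcsOfComplex J ∘ₗ gcsOfSymplectic' (g.toLinearMap ∘ₗ J) ωinv)) u =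
        (g.symm u.2, g u.1) := by
      have h1 : J (ωinv u.2) = g.symm u.2 := by
        apply g.injective
        rw [hinv2' u.2, g.apply_symm_apply]
      have h2 : (g (J u.1)) ∘ₗ J = g u.1 := by
        ext y
        simp only [LinearMap.comp_apply]
        rw [horth u.1 y]
      simp only [LinearMap.neg_apply, LinearMap.comp_apply, gcsOfComplex, gcsOfSymplectic',
        LinearMap.prodMap_apply, LinearMap.prod_apply, Pi.prod, LinearMap.snd_apply,
        LinearMap.fst_apply, LinearEquiv.coe_coe, map_neg, LinearMap.dualMap_apply, Prod.neg_mk]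
      rw [Prod.ext_iff]
      refine ⟨by simpa using h1, ?_⟩
      show -(-(g (J u.1) ∘ₗ J)) = g.toLinearMap u.1
      rw [neg_neg, h2]; rfl
    rw [hform]
    simp only [naturalPairing]
    have ha : 0 ≤ g u.1 u.1 := by
      rcases eq_or_ne u.1 0 with h | h
      · simp [h]
      · exact (hpos u.1 h).le
    have hb : 0 ≤ u.2 (g.symm u.2) := by
      have : u.2 (g.symm u.2) = g (g.symm u.2) (g.symm u.2) := by
        rw [g.apply_symm_apply]
      rw [this]
      rcases eq_or_ne (g.symm u.2) 0 with h | h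
      · simp [h]
      · exact (hpos _ h).le
    have hlt : 0 < u.2 (g.symm u.2) + g u.1 u.1 := by
      rcases (by simpa [Prod.ext_iff] using hu : ¬(u.1 = 0 ∧ u.2 = 0)) with h
      by_cases h1 : u.1 = 0
      · have h2 : u.2 ≠ 0 := fun h2 => h ⟨h1, h2⟩
        have hs : g.symm u.2 ≠ 0 := fun hs => h2 (by
          have := congrArg g hs
          simpa using this)
        have : 0 < u.2 (g.symm u.2) := by
          rw [show u.2 (g.symm u.2) = g (g.symm u.2) (g.symm u.2) by rw [g.apply_symm_apply]]
          exact hpos _ hs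
        linarith
      · linarith [hpos u.1 h1]
    linarith
end

section
/- Let E be a finite-dimensional real inner product space, H : E → E a self-adjoint linear endomorphism, and K : E → E a skew-adjoint linear endomorphism with H K = K H. Then for every λ ∈ ℝ, if the restriction of K to the eigenspace E_λ = ker(H − λ·id) is injective, then dim_ℝ E_λ is even. (This is the linear-algebraic core of the claim that the nonzero eigenspaces of the Hessian of a generalized moment map component are even-dimensional, so that the index and coindex of each critical manifold are even.) -/
/-- Linear-algebraic core of the evenness of index and coindex: if `H` is self-adjoint,
`K` is skew-adjoint, `H` and `K` commute, and `K` is injective on the `λ`-eigenspace of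
`H`, then that eigenspace is even-dimensional. -/
theorem eigenspace_even_dim_of_skewAdjoint_injective {E : Type*} [NormedAddCommGroup E]
    [InnerProductSpace ℝ E] [FiniteDimensional ℝ E]
    (H K : E →ₗ[ℝ] E)
    (hH : LinearMap.adjoint H = H) (hK : LinearMap.adjoint K = -K)
    (hcomm : H ∘ₗ K = K ∘ₗ H) (lam : ℝ)
    (hinj : ∀ x ∈ LinearMap.ker (H - lam • LinearMap.id), K x = 0 → x = 0) :
    Even (Module.finrank ℝ ↥(LinearMap.ker (H - lam • LinearMap.id))) := by
  set V := LinearMap.ker (H - lam • LinearMap.id) with hV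
  have hKV : ∀ x ∈ V, K x ∈ V := by
    intro x hx
    have hx' : H x = lam • x := by
      have := hx
      simp only [hV, LinearMap.mem_ker, LinearMap.sub_apply, LinearMap.smul_apply,
        LinearMap.id_apply, sub_eq_zero] at this
      exact this
    simp only [hV, LinearMap.mem_ker, LinearMap.sub_apply, LinearMap.smul_apply,
      LinearMap.id_apply, sub_eq_zero]
    have : H (K x) = K (H x) := congrFun (congrArg DFunLike.coe hcomm) x
    rw [this, hx', map_smul]
  set K' : V →ₗ[ℝ] V := K.restrict hKV with hK'
  -- K' is skew-adjoint
  have hadj : -K' = LinearMap.adjoint K' := by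
    rw [LinearMap.eq_adjoint_iff]
    intro x y
    have h1 : (inner ℝ (K (x : E)) (y : E) : ℝ) = - inner ℝ (x : E) (K (y : E)) := by
      have := LinearMap.adjoint_inner_left K (x : E) (y : E)
      rw [hK] at this
      simp only [LinearMap.neg_apply, inner_neg_left] at this
      rw [real_inner_comm] at this
      linarith [this, real_inner_comm (K (x:E)) (y:E)]
    show (inner ℝ ((-K' x : V) : E) ((y : V) : E) : ℝ) = inner ℝ ((x : V) : E) ((K' y : V) : E)
    simp only [hK', LinearMap.neg_apply, NegMemClass.coe_neg, LinearMap.restrict_coe_apply,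
      inner_neg_left]
    rw [h1]; ring
  -- K' is injective, hence det ≠ 0
  have hKinj : Function.Injective K' := by
    intro x y hxy
    have : K' (x - y) = 0 := by rw [map_sub, hxy, sub_self]
    have hxy0 : K ((x - y : V) : E) = 0 := by
      have := congrArg (Subtype.val) this
      simpa [hK', LinearMap.restrict_coe_apply] using this
    have := hinj _ (x - y).2 hxy0
    have : (x - y : V) = 0 := Subtype.ext this
    rwa [sub_eq_zero] at this
  have hbij : Function.Bijective K' :=
    ⟨hKinj, (LinearMap.injective_iff_surjective).mp hKinj⟩
  have hdet_ne : LinearMap.det K' ≠ 0 := by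
    have : IsUnit (LinearMap.det K') := by
      exact (LinearEquiv.ofBijective K' hbij).isUnit_det'
    exact this.ne_zero
  -- det of adjoint equals det over ℝ
  have hdet_adj : LinearMap.det (LinearMap.adjoint K') = LinearMap.det K' := by
    let b := stdOrthonormalBasis ℝ V
    rw [← LinearMap.det_toMatrix b.toBasis, ← LinearMap.det_toMatrix b.toBasis,
      LinearMap.toMatrix_adjoint b b]
    rw [Matrix.det_conjTranspose]
    exact star_trivial _
  set n := Module.finrank ℝ V with hn
  rcases Nat.even_or_odd n with he | ho
  · exact he
  · exfalso
    have h1 : LinearMap.det (-K') = (-1 : ℝ) ^ n * LinearMap.det K' := by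
      rw [show -K' = (-1 : ℝ) • K' from (neg_one_smul ℝ K').symm, LinearMap.det_smul]
    rw [hadj, hdet_adj, Odd.neg_one_pow ho] at h1
    have : LinearMap.det K' = 0 := by linarith
    exact hdet_ne this
end

section
/- Let a₁, …, a_N ∈ ℝ^m and let a ∈ ℝ^m be a point not contained in the convex hull of {a₁, …, a_N}. Then there exists ξ ∈ ℝ^m whose coordinates ξ₁, …, ξ_m are linearly independent over ℚ such that ⟨a_i, ξ⟩ < ⟨a, ξ⟩ for all i = 1, …, N, where ⟨·,·⟩ denotes the standard inner product on ℝ^m. -/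
lemma dense_ne_zero_sum {m : ℕ} (q : Fin m → ℚ) (hq : q ≠ 0) :
    Dense {ξ : Fin m → ℝ | ∑ j, (q j : ℝ) * ξ j ≠ 0} := by
  rw [dense_iff_inter_open]
  intro U hU hUne
  obtain ⟨x, hx⟩ := hUne
  by_cases h : ∑ j, (q j : ℝ) * x j ≠ 0
  · exact ⟨x, hx, h⟩
  push_neg at h
  obtain ⟨j0, hj0⟩ : ∃ j0, q j0 ≠ 0 := by
    by_contra hc; push_neg at hc; exact hq (funext hc)
  set v : Fin m → ℝ := Pi.single j0 (1:ℝ) with hv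
  have hcont : Continuous fun t : ℝ => x + t • v := by continuity
  have hopen : IsOpen ((fun t : ℝ => x + t • v) ⁻¹' U) := hU.preimage hcont
  have h0mem : (0:ℝ) ∈ (fun t : ℝ => x + t • v) ⁻¹' U := by
    simp [Set.mem_preimage, hx]
  obtain ⟨ε, hε, hball⟩ := Metric.isOpen_iff.mp hopen 0 h0mem
  refine ⟨x + (ε/2) • v, hball ?_, ?_⟩
  · simp only [Metric.mem_ball, Real.dist_eq, sub_zero]
    rw [abs_of_nonneg (by positivity)]; linarith
  · simp only [Set.mem_setOf_eq]
    have hsum : ∑ j, (q j : ℝ) * (x + (ε/2) • v) j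
        = ∑ j, (q j : ℝ) * x j + (ε/2) * (q j0 : ℝ) := by
      simp only [Pi.add_apply, Pi.smul_apply, smul_eq_mul, mul_add]
      rw [Finset.sum_add_distrib]
      congr 1
      rw [Finset.sum_eq_single j0]
      · simp [hv, Pi.single_apply]; ring
      · intro b _ hb; simp [hv, Pi.single_apply, hb]
      · simp
    rw [hsum, h, zero_add]
    have : (q j0 : ℝ) ≠ 0 := by exact_mod_cast hj0
    positivity


/-- If a point `a ∈ ℝ^m` is not in the convex hull of `a₁, …, a_N`, then there is a
vector `ξ ∈ ℝ^m` whose coordinates are linearly independent over `ℚ` such that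
`⟨a_i, ξ⟩ < ⟨a, ξ⟩` for all `i`. -/
theorem exists_rationally_independent_separating_vector {m N : ℕ}
    (a : Fin N → (Fin m → ℝ)) (p : Fin m → ℝ)
    (hp : p ∉ convexHull ℝ (Set.range a)) :
    ∃ ξ : Fin m → ℝ, LinearIndependent ℚ ξ ∧
      ∀ i : Fin N, ∑ j, a i j * ξ j < ∑ j, p j * ξ j := by
  -- Hahn-Banach separation
  obtain ⟨f, u, hfu, hup⟩ := geometric_hahn_banach_closed_point
    (convex_convexHull ℝ (Set.range a))
    (((Set.finite_range a).isCompact_convexHull (𝕜 := ℝ)).isClosed) hp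
  set ξ0 : Fin m → ℝ := fun i => f (fun j => if i = j then (1:ℝ) else 0) with hξ0
  have hf : ∀ x : Fin m → ℝ, f x = ∑ j, x j * ξ0 j := by
    intro x
    have := LinearMap.pi_apply_eq_sum_univ (f : (Fin m → ℝ) →ₗ[ℝ] ℝ) x
    simpa [smul_eq_mul] using this
  have hsep : ∀ i : Fin N, ∑ j, a i j * ξ0 j < ∑ j, p j * ξ0 j := by
    intro i
    rw [← hf, ← hf]
    exact lt_trans (hfu (a i) (subset_convexHull ℝ _ (Set.mem_range_self i))) hup
  -- the open set of separating vectors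
  set U : Set (Fin m → ℝ) :=
    ⋂ i : Fin N, {ξ | ∑ j, a i j * ξ j < ∑ j, p j * ξ j} with hU
  have hUopen : IsOpen U := by
    apply isOpen_iInter_of_finite
    intro i
    have c1 : Continuous fun ξ : Fin m → ℝ => ∑ j, a i j * ξ j :=
      continuous_finset_sum _ fun j _ => (continuous_const.mul (continuous_apply j))
    have c2 : Continuous fun ξ : Fin m → ℝ => ∑ j, p j * ξ j :=
      continuous_finset_sum _ fun j _ => (continuous_const.mul (continuous_apply j))
    exact isOpen_lt c1 c2
  have hξ0U : ξ0 ∈ U := by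
    simp only [hU, Set.mem_iInter, Set.mem_setOf_eq]; exact hsep
  -- dense set of rationally independent vectors
  have hD : Dense (⋂ q : {q : Fin m → ℚ // q ≠ 0},
      {ξ : Fin m → ℝ | ∑ j, ((q:Fin m → ℚ) j : ℝ) * ξ j ≠ 0}) := by
    apply dense_iInter_of_isOpen
    · rintro ⟨q, hq⟩
      have hc : Continuous fun ξ : Fin m → ℝ => ∑ j, (q j : ℝ) * ξ j :=
        continuous_finset_sum _ fun j _ => (continuous_const.mul (continuous_apply j))
      exact (isClosed_eq hc continuous_const).isOpen_compl
    · rintro ⟨q, hq⟩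
      exact dense_ne_zero_sum q hq
  obtain ⟨ξ, hξU, hξD⟩ := dense_iff_inter_open.mp hD U hUopen ⟨ξ0, hξ0U⟩
  refine ⟨ξ, ?_, ?_⟩
  · rw [Fintype.linearIndependent_iff]
    intro g hg
    by_contra hc
    push_neg at hc
    obtain ⟨i, hi⟩ := hc
    have hgne : g ≠ 0 := fun h => hi (congrFun h i)
    have := Set.mem_iInter.mp hξD ⟨g, hgne⟩
    simp only [Set.mem_setOf_eq] at this
    apply this
    rw [← hg]
    exact Finset.sum_congr rfl fun j _ => by rw [Rat.smul_def]
  · intro i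
    exact Set.mem_iInter.mp hξU i
end

section
/- Let X be a set, μ : X → ℝ^m a map, and a₁, …, a_N ∈ ℝ^m. Suppose that for every ξ ∈ ℝ^m whose coordinates are linearly independent over ℚ one has ⟨μ(p), ξ⟩ ≤ max_{1 ≤ i ≤ N} ⟨a_i, ξ⟩ for all p ∈ X, where ⟨·,·⟩ is the standard inner product on ℝ^m. Then the image μ(X) is contained in the convex hull of {a₁, …, a_N}. (This is the final step in the proof that the image of the generalized moment map is the convex hull of the images of the fixed points of the torus action.) -/
lemma aux_dense_open (m : ℕ) (c : Fin m → ℚ) (hc : c ≠ 0) :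
    Dense {ξ : Fin m → ℝ | ∑ j, (c j : ℝ) * ξ j ≠ 0} := by
  obtain ⟨j, hj⟩ : ∃ j, c j ≠ 0 := by
    by_contra hn; push_neg at hn; exact hc (funext hn)
  rw [Metric.dense_iff]
  intro ξ ε hε
  set s := ∑ k, (c k : ℝ) * ξ k with hs
  by_cases h0 : s = 0
  · set t : ℝ := ε / (2 * |(c j : ℝ)| + 2) with ht
    have htpos : 0 < t := by positivity
    have htlt : t < ε := by
      apply div_lt_self hε
      have := abs_nonneg ((c j : ℝ)); linarith
    refine ⟨fun k => ξ k + t * (Pi.single j 1 : Fin m → ℝ) k, ?_, ?_⟩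
    · rw [Metric.mem_ball]
      have hd : dist (fun k => ξ k + t * (Pi.single j 1 : Fin m → ℝ) k) ξ ≤ t := by
        rw [dist_pi_le_iff htpos.le]
        intro k
        simp only [Real.dist_eq, add_sub_cancel_left]
        rw [abs_mul]
        have h1 : |(Pi.single j 1 : Fin m → ℝ) k| ≤ 1 := by
          rcases eq_or_ne k j with rfl | hk
          · simp
          · simp [Pi.single_eq_of_ne hk]
        calc |t| * |(Pi.single j 1 : Fin m → ℝ) k| ≤ |t| * 1 :=
              mul_le_mul_of_nonneg_left h1 (abs_nonneg _)
          _ = t := by rw [mul_one, abs_of_pos htpos]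
      linarith
    · show ∑ k, (c k : ℝ) * (ξ k + t * (Pi.single j 1 : Fin m → ℝ) k) ≠ 0
      have heq : ∑ k, (c k : ℝ) * (ξ k + t * (Pi.single j 1 : Fin m → ℝ) k)
          = s + t * (c j : ℝ) := by
        rw [hs]
        simp only [mul_add, Finset.sum_add_distrib]
        congr 1
        rw [Finset.sum_eq_single j]
        · simp; ring
        · intro k _ hk; simp [Pi.single_eq_of_ne hk]
        · simp
      rw [heq, h0, zero_add]
      have hcj : (c j : ℝ) ≠ 0 := by exact_mod_cast hj
      exact mul_ne_zero htpos.ne' hcj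
  · exact ⟨ξ, Metric.mem_ball_self hε, h0⟩

lemma aux_dense (m : ℕ) :
    Dense {ξ : Fin m → ℝ | LinearIndependent ℚ ξ} := by
  have hD : Dense (⋂ c : {c : Fin m → ℚ // c ≠ 0},
      {ξ : Fin m → ℝ | ∑ j, ((c : Fin m → ℚ) j : ℝ) * ξ j ≠ 0}) := by
    apply dense_iInter_of_isOpen
    · intro c
      have : Continuous fun ξ : Fin m → ℝ => ∑ j, ((c : Fin m → ℚ) j : ℝ) * ξ j :=
        continuous_finset_sum _ fun j _ => (continuous_const.mul (continuous_apply j))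
      exact isOpen_compl_iff.mpr (isClosed_singleton.preimage this)
    · intro c; exact aux_dense_open m c c.2
  apply hD.mono
  intro ξ hξ
  rw [Set.mem_iInter] at hξ
  rw [Set.mem_setOf_eq, Fintype.linearIndependent_iff]
  intro g hg
  by_contra hng
  push_neg at hng
  obtain ⟨j, hj⟩ := hng
  have hgne : g ≠ 0 := fun h => hj (by rw [h]; rfl)
  apply hξ ⟨g, hgne⟩
  show ∑ k, (g k : ℝ) * ξ k = 0
  calc ∑ k, (g k : ℝ) * ξ k = ∑ k, g k • ξ k := by
        simp [Rat.smul_def]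
    _ = 0 := hg

/-- If for every `ξ ∈ ℝ^m` with coordinates linearly independent over `ℚ` one has
`⟨μ(p), ξ⟩ ≤ max_i ⟨a_i, ξ⟩` for all `p`, then the image of `μ` is contained in the
convex hull of `a₁, …, a_N`. -/
theorem image_subset_convexHull_of_rationally_independent_bounds {m N : ℕ} [NeZero N]
    {X : Type*} (μ : X → (Fin m → ℝ)) (a : Fin N → (Fin m → ℝ))
    (h : ∀ ξ : Fin m → ℝ, LinearIndependent ℚ ξ →
      ∀ p : X, ∑ j, μ p j * ξ j ≤
        Finset.univ.sup' Finset.univ_nonempty (fun i : Fin N => ∑ j, a i j * ξ j)) :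
    Set.range μ ⊆ convexHull ℝ (Set.range a) := by
  rintro _ ⟨p, rfl⟩
  set S : Set (Fin m → ℝ) := {ξ : Fin m → ℝ | ∑ j, μ p j * ξ j ≤
      Finset.univ.sup' Finset.univ_nonempty (fun i : Fin N => ∑ j, a i j * ξ j)} with hS
  have hclosed : IsClosed S := by
    have hU : S = ⋃ i : Fin N, {ξ : Fin m → ℝ | ∑ j, μ p j * ξ j ≤ ∑ j, a i j * ξ j} := by
      ext ξ
      simp only [hS, Set.mem_setOf_eq, Set.mem_iUnion, Finset.le_sup'_iff, Finset.mem_univ,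
        true_and]
    rw [hU]
    apply isClosed_iUnion_of_finite
    intro i
    exact isClosed_le
      (continuous_finset_sum _ fun j _ => (continuous_const.mul (continuous_apply j)))
      (continuous_finset_sum _ fun j _ => (continuous_const.mul (continuous_apply j)))
  have hdense : Dense S := (aux_dense m).mono (fun ξ hξ => h ξ hξ p)
  have huniv : S = Set.univ := by rw [← hclosed.closure_eq]; exact hdense.closure_eq
  have hall : ∀ ξ : Fin m → ℝ, ∑ j, μ p j * ξ j ≤
      Finset.univ.sup' Finset.univ_nonempty (fun i : Fin N => ∑ j, a i j * ξ j) := by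
    intro ξ
    have : ξ ∈ S := by rw [huniv]; trivial
    exact this
  by_contra hx
  have hconv : Convex ℝ (convexHull ℝ (Set.range a)) := convex_convexHull ℝ _
  have hcl : IsClosed (convexHull ℝ (Set.range a)) :=
    (Set.finite_range a).isClosed_convexHull (𝕜 := ℝ)
  obtain ⟨f, u, hfu⟩ := geometric_hahn_banach_closed_point hconv hcl hx
  set ξ : Fin m → ℝ := fun j => f (Pi.single j 1) with hξdef
  have hfx : ∀ y : Fin m → ℝ, f y = ∑ j, y j * ξ j := by
    intro y
    conv_lhs => rw [pi_eq_sum_univ y]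
    rw [map_sum]
    congr 1; ext j
    rw [map_smul, smul_eq_mul]
    congr 1
    show f (fun k => if j = k then (1:ℝ) else 0) = f (Pi.single j 1)
    congr 1
    ext k
    simp [Pi.single_apply, eq_comm]
  have h1 : ∀ i, ∑ j, a i j * ξ j < u := by
    intro i
    rw [← hfx]
    exact hfu.1 _ (subset_convexHull ℝ _ (Set.mem_range_self i))
  have h2 : u < ∑ j, μ p j * ξ j := by rw [← hfx]; exact hfu.2
  have h4 : Finset.univ.sup' Finset.univ_nonempty (fun i : Fin N => ∑ j, a i j * ξ j) < u :=
    (Finset.sup'_lt_iff _).mpr fun i _ => h1 i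
  linarith [hall ξ]
end
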